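/- Let U ∈ ℝ^{m×r} have orthonormal columns and let P_U = UU^⊤ be the orthogonal projection. Define the incoherence constant I(U) = max_i ‖e_i^⊤ U‖₂². Then for any matrix A ∈ ℝ^{m×m}, ‖D(P_U A)‖_sp ≤ √(I(U)) · ‖A‖_sp, where D(·) denotes the operation of zeroing all off-diagonal entries. -/

import Mathlib

open Matrix

/-- Spectral (ℓ₂ operator) norm of a real matrix. -/
noncomputable def spNorm {m n : ℕ} (M : Matrix (Fin m) (Fin n) ℝ) : ℝ :=
  ‖(Matrix.toEuclideanLin M).toContinuousLinearMap‖

/-- The diagonal part `D(M)` of a square matrix. -/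
def diagPart {m : ℕ} (M : Matrix (Fin m) (Fin m) ℝ) : Matrix (Fin m) (Fin m) ℝ :=
  Matrix.diagonal (fun i => M i i)

lemma norm_euclidean {m : ℕ} (v : Fin m → ℝ) :
    ‖(WithLp.equiv 2 (Fin m → ℝ)).symm v‖ = Real.sqrt (∑ k, (v k) ^ 2) := by
  rw [EuclideanSpace.norm_eq]
  congr 1
  refine Finset.sum_congr rfl fun k _ => ?_
  simp [sq_abs]

lemma sq_col_le_spNorm_sq {m n : ℕ} (A : Matrix (Fin m) (Fin n) ℝ) (i : Fin n) :
    ∑ k, (A k i) ^ 2 ≤ (spNorm A) ^ 2 := by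
  have h := (Matrix.toEuclideanLin A).toContinuousLinearMap.le_opNorm
    ((WithLp.equiv 2 (Fin n → ℝ)).symm (Pi.single i 1))
  rw [LinearMap.coe_toContinuousLinearMap'] at h
  rw [Matrix.toEuclideanLin_apply] at h
  change ‖(WithLp.equiv 2 (Fin m → ℝ)).symm (A *ᵥ Pi.single i 1)‖
    ≤ _ * ‖(WithLp.equiv 2 (Fin n → ℝ)).symm (Pi.single i 1)‖ at h
  rw [Matrix.mulVec_single] at h
  rw [norm_euclidean, norm_euclidean] at h
  have h1 : Real.sqrt (∑ k, (Pi.single (M := fun _ : Fin n => ℝ) i 1 k) ^ 2) = 1 := by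
    rw [show (∑ k, (Pi.single (M := fun _ : Fin n => ℝ) i 1 k) ^ 2) = 1 by
      rw [Finset.sum_eq_single i] <;> simp +contextual [Pi.single_apply]]
    exact Real.sqrt_one
  rw [h1, mul_one] at h
  have h2 : ∑ k, (A k i * 1) ^ 2 = ∑ k, (A k i) ^ 2 := by simp
  calc ∑ k, (A k i) ^ 2 = Real.sqrt (∑ k, (A k i * 1) ^ 2) ^ 2 := by
        rw [Real.sq_sqrt (Finset.sum_nonneg fun _ _ => sq_nonneg _), h2]
    _ ≤ (spNorm A) ^ 2 := by
        apply pow_le_pow_left₀ (Real.sqrt_nonneg _) h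

lemma spNorm_diagonal_le {m : ℕ} (d : Fin m → ℝ) (c : ℝ) (hc : 0 ≤ c)
    (h : ∀ i, |d i| ≤ c) : spNorm (Matrix.diagonal d) ≤ c := by
  apply ContinuousLinearMap.opNorm_le_bound _ hc
  intro x
  rw [LinearMap.coe_toContinuousLinearMap', Matrix.toEuclideanLin_apply]
  set v : Fin m → ℝ := (WithLp.equiv 2 (Fin m → ℝ)) x with hv
  have hx : ‖x‖ = Real.sqrt (∑ k, (v k) ^ 2) := by
    rw [← norm_euclidean v, hv]
    congr 1
  change ‖(WithLp.equiv 2 (Fin m → ℝ)).symm (Matrix.diagonal d *ᵥ v)‖ ≤ c * ‖x‖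
  rw [norm_euclidean, hx]
  rw [← Real.sqrt_sq hc, ← Real.sqrt_mul (sq_nonneg c)]
  apply Real.sqrt_le_sqrt
  rw [Finset.mul_sum]
  refine Finset.sum_le_sum fun k _ => ?_
  rw [Matrix.mulVec_diagonal, mul_pow]
  have : (d k) ^ 2 ≤ c ^ 2 := by
    rw [← sq_abs (d k)]
    exact pow_le_pow_left₀ (abs_nonneg _) (h k) 2
  exact mul_le_mul_of_nonneg_right this (sq_nonneg _)

theorem spNorm_diagPart_proj_le {m r : ℕ}
    (U : Matrix (Fin m) (Fin r) ℝ) (A : Matrix (Fin m) (Fin m) ℝ) (IU : ℝ)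
    (hU : U.transpose * U = 1)
    (hIU0 : 0 ≤ IU)
    (hIU : ∀ i, (∑ j, (U i j) ^ 2) ≤ IU) :
    spNorm (diagPart ((U * U.transpose) * A)) ≤ Real.sqrt IU * spNorm A := by
  have hsp : 0 ≤ spNorm A := norm_nonneg _
  have hc : 0 ≤ Real.sqrt IU * spNorm A := mul_nonneg (Real.sqrt_nonneg _) hsp
  apply spNorm_diagonal_le _ _ hc
  intro i
  -- d_i = ∑_j U i j * y j, where y j = ∑ k U k j * A k i
  set y : Fin r → ℝ := fun j => ∑ k, U k j * A k i with hy
  have hd : ((U * U.transpose) * A) i i = ∑ j, U i j * y j := by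
    rw [Matrix.mul_assoc]
    simp only [Matrix.mul_apply, hy, Matrix.transpose_apply]
  -- orthonormality in sums: ∑ k, U k j * U k j' = δ
  have horth : ∀ j j', ∑ k, U k j * U k j' = if j = j' then (1:ℝ) else 0 := by
    intro j j'
    have := congrFun (congrFun hU j) j'
    simpa [Matrix.mul_apply, Matrix.transpose_apply, Matrix.one_apply] using this
  -- ∑ y² ≤ ∑ (A k i)²
  have hyz : ∑ j, (y j) ^ 2 ≤ ∑ k, (A k i) ^ 2 := by
    have hS0 : 0 ≤ ∑ j, (y j) ^ 2 := Finset.sum_nonneg fun _ _ => sq_nonneg _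
    have key : ∑ k, (∑ j, U k j * y j) ^ 2 = ∑ j, (y j) ^ 2 := by
      have : ∀ k, (∑ j, U k j * y j) ^ 2
          = ∑ j, ∑ j', (U k j * y j) * (U k j' * y j') := by
        intro k; rw [sq, Finset.sum_mul_sum]
      simp_rw [this]
      rw [Finset.sum_comm]
      have : ∀ j, ∑ k, ∑ j', (U k j * y j) * (U k j' * y j')
          = ∑ j', (y j * y j') * ∑ k, U k j * U k j' := by
        intro j
        rw [Finset.sum_comm]
        refine Finset.sum_congr rfl fun j' _ => ?_
        rw [Finset.mul_sum]
        refine Finset.sum_congr rfl fun k _ => ?_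
        ring
      simp_rw [this, horth]
      refine Finset.sum_congr rfl fun j _ => ?_
      rw [Finset.sum_eq_single j]
      · simp [sq]
      · intro b _ hb
        rw [if_neg fun h => hb h.symm, mul_zero]
      · simp
    have hrw : ∑ j, (y j) ^ 2 = ∑ k, A k i * (∑ j, U k j * y j) := by
      calc ∑ j, (y j) ^ 2
          = ∑ j, ∑ k, (U k j * A k i) * y j := by
            refine Finset.sum_congr rfl fun j _ => ?_
            conv_lhs => rw [sq, show y j = ∑ k, U k j * A k i from rfl, Finset.sum_mul]
        _ = ∑ k, ∑ j, (U k j * A k i) * y j := Finset.sum_comm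
        _ = ∑ k, A k i * (∑ j, U k j * y j) := by
            refine Finset.sum_congr rfl fun k _ => ?_
            rw [Finset.mul_sum]
            exact Finset.sum_congr rfl fun j _ => by ring
    have hcs := Finset.sum_mul_sq_le_sq_mul_sq Finset.univ
      (fun k => A k i) (fun k => ∑ j, U k j * y j)
    rw [← hrw, key] at hcs
    rcases eq_or_lt_of_le hS0 with h0 | h0
    · rw [← h0]; exact Finset.sum_nonneg fun _ _ => sq_nonneg _
    · exact le_of_mul_le_mul_right (by rw [← sq]; exact hcs) h0
  -- Cauchy-Schwarz on d_i
  have hcs2 := Finset.sum_mul_sq_le_sq_mul_sq Finset.univ (fun j => U i j) y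
  have habs : |((U * U.transpose) * A) i i| ^ 2 ≤ IU * (spNorm A) ^ 2 := by
    rw [hd, sq_abs]
    calc (∑ j, U i j * y j) ^ 2
        ≤ (∑ j, (U i j) ^ 2) * ∑ j, (y j) ^ 2 := hcs2
      _ ≤ IU * (spNorm A) ^ 2 := by
          apply mul_le_mul (hIU i) (hyz.trans (sq_col_le_spNorm_sq A i))
            (Finset.sum_nonneg fun _ _ => sq_nonneg _) hIU0
  have : |((U * U.transpose) * A) i i| ≤ Real.sqrt (IU * (spNorm A) ^ 2) := by
    rw [← Real.sqrt_sq (abs_nonneg _)]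
    exact Real.sqrt_le_sqrt habs
  calc |((U * U.transpose) * A) i i|
      ≤ Real.sqrt (IU * (spNorm A) ^ 2) := this
    _ = Real.sqrt IU * spNorm A := by
        rw [Real.sqrt_mul hIU0, Real.sqrt_sq hsp]
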